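/- Let ρ^ε be a Borel probability measure on 𝒳 with finite second moment, f ∈ L²(ρ) ∩ L²(ρ^ε), and let μ† ∈ M(Ω) satisfy L_ρ(f − Kμ†) = 0 on Ω. Then for every ν ∈ M(Ω), the quantity ∫_Ω L_{ρ^ε}(f − Kν) d(ν − μ†) is strictly negative whenever ‖f − Kν‖_{L²(ρ^ε)} > ‖f − Kμ†‖_{L²(ρ^ε)}. -/

import Mathlib

open MeasureTheory RealInnerProductSpace

noncomputable section

/-- Integral of a real function against a signed measure, via the Jordan decomposition. -/
def sInt {α : Type*} [MeasurableSpace α] (μ : SignedMeasure α) (g : α → ℝ) : ℝ :=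
  (∫ w, g w ∂μ.toJordanDecomposition.posPart) - ∫ w, g w ∂μ.toJordanDecomposition.negPart

/-- Total variation norm of a signed measure. -/
def tvNorm {α : Type*} [MeasurableSpace α] (μ : SignedMeasure α) : ℝ :=
  (μ.totalVariation Set.univ).toReal

/-- Input space ℝ^d. -/
abbrev Ed (d : ℕ) := EuclideanSpace ℝ (Fin d)

/-- Parameter space ℝ^d × ℝ. -/
abbrev Pd (d : ℕ) := EuclideanSpace ℝ (Fin d) × ℝ

/-- The weight V(a,b) = 1 + ‖a‖ + |b|. -/
def Vw {d : ℕ} (w : Pd d) : ℝ := 1 + ‖w.1‖ + |w.2|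

/-- The Barron-norm functional J(μ) = ∫ V d|μ|. -/
def Jfun {d : ℕ} {Ω : Set (Pd d)} (μ : SignedMeasure ↥Ω) : ℝ :=
  ∫ w, Vw (w : Pd d) ∂μ.totalVariation

/-- (Kμ)(x) = ∫_Ω σ(aᵀx + b) dμ(a,b). -/
def Kop {d : ℕ} (σ : ℝ → ℝ) {Ω : Set (Pd d)} (μ : SignedMeasure ↥Ω) (x : Ed d) : ℝ :=
  sInt μ (fun w => σ (⟪(w : Pd d).1, x⟫ + (w : Pd d).2))

/-- (L_ρ φ)(a,b) = ∫ φ(x) σ(aᵀx + b) dρ(x). -/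
def Lop {d : ℕ} (σ : ℝ → ℝ) (ρ : Measure (Ed d)) (φ : Ed d → ℝ) (w : Pd d) : ℝ :=
  ∫ x, φ x * σ (⟪w.1, x⟫ + w.2) ∂ρ

/-- Squared L²(ρ) norm. -/
def L2sq {d : ℕ} (ρ : Measure (Ed d)) (g : Ed d → ℝ) : ℝ := ∫ x, g x ^ 2 ∂ρ

/-- L²(ρ) norm. -/
def L2norm {d : ℕ} (ρ : Measure (Ed d)) (g : Ed d → ℝ) : ℝ := Real.sqrt (L2sq ρ g)

/-- The loss R_f(μ) = ½‖Kμ − f‖²_{L²(ρ)}. -/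
def Rf {d : ℕ} (σ : ℝ → ℝ) {Ω : Set (Pd d)} (ρ : Measure (Ed d)) (f : Ed d → ℝ)
    (μ : SignedMeasure ↥Ω) : ℝ := (1 / 2) * L2sq ρ (fun x => Kop σ μ x - f x)

/-- Bregman divergence D_J^p(μ, ν) = J(μ) − J(ν) − ∫ p d(μ − ν). -/
def DJ {d : ℕ} {Ω : Set (Pd d)} (p : Pd d → ℝ) (μ ν : SignedMeasure ↥Ω) : ℝ :=
  Jfun μ - Jfun ν - sInt (μ - ν) (fun w => p (w : Pd d))

/-- L² × L² products are integrable (elementary AM–GM bound). -/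
theorem mulL2_integrable {α : Type*} [MeasurableSpace α] {μ : Measure α} {g h : α → ℝ}
    (hg : MemLp g 2 μ) (hh : MemLp h 2 μ) : Integrable (fun x => g x * h x) μ := by
  have hg2 : Integrable (fun x => g x ^ 2) μ := (memLp_two_iff_integrable_sq hg.1).mp hg
  have hh2 : Integrable (fun x => h x ^ 2) μ := (memLp_two_iff_integrable_sq hh.1).mp hh
  refine ((hg2.add hh2).div_const 2).mono' (hg.1.mul hh.1) ?_
  filter_upwards with x
  rw [Real.norm_eq_abs, abs_mul]
  simp only [Pi.add_apply]
  nlinarith [sq_nonneg (|g x| - |h x|), sq_abs (g x), sq_abs (h x), abs_nonneg (g x), abs_nonneg (h x)]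

/-- `sInt` is additive over differences of signed measures. -/
theorem sInt_sub {α : Type*} [MeasurableSpace α] (μ ν : SignedMeasure α) {g : α → ℝ}
    (hg : ∀ (P : Measure α), IsFiniteMeasure P → Integrable g P) :
    sInt (μ - ν) g = sInt μ g - sInt ν g := by
  set J1 := (μ - ν).toJordanDecomposition with hJ1
  set J2 := μ.toJordanDecomposition with hJ2
  set J3 := ν.toJordanDecomposition with hJ3
  have key : J1.posPart + (J2.negPart + J3.posPart) = J1.negPart + (J2.posPart + J3.negPart) := by
    ext s hs
    have e1 : (μ - ν) s = (J1.posPart s).toReal - (J1.negPart s).toReal := by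
      conv_lhs => rw [← SignedMeasure.toSignedMeasure_toJordanDecomposition (μ - ν)]
      rw [← hJ1, JordanDecomposition.toSignedMeasure, VectorMeasure.sub_apply,
        Measure.toSignedMeasure_apply_measurable hs, Measure.toSignedMeasure_apply_measurable hs]
      rfl
    have e2 : μ s = (J2.posPart s).toReal - (J2.negPart s).toReal := by
      conv_lhs => rw [← SignedMeasure.toSignedMeasure_toJordanDecomposition μ]
      rw [← hJ2, JordanDecomposition.toSignedMeasure, VectorMeasure.sub_apply,
        Measure.toSignedMeasure_apply_measurable hs, Measure.toSignedMeasure_apply_measurable hs]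
      rfl
    have e3 : ν s = (J3.posPart s).toReal - (J3.negPart s).toReal := by
      conv_lhs => rw [← SignedMeasure.toSignedMeasure_toJordanDecomposition ν]
      rw [← hJ3, JordanDecomposition.toSignedMeasure, VectorMeasure.sub_apply,
        Measure.toSignedMeasure_apply_measurable hs, Measure.toSignedMeasure_apply_measurable hs]
      rfl
    have e4 : (μ - ν) s = μ s - ν s := by rw [VectorMeasure.sub_apply]
    have h1 : J1.posPart s ≠ ⊤ := measure_ne_top _ _
    have h2 : J1.negPart s ≠ ⊤ := measure_ne_top _ _
    have h3 : J2.posPart s ≠ ⊤ := measure_ne_top _ _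
    have h4 : J2.negPart s ≠ ⊤ := measure_ne_top _ _
    have h5 : J3.posPart s ≠ ⊤ := measure_ne_top _ _
    have h6 : J3.negPart s ≠ ⊤ := measure_ne_top _ _
    simp only [Measure.add_apply]
    rw [← ENNReal.toReal_eq_toReal_iff' (by finiteness) (by finiteness)]
    rw [ENNReal.toReal_add h1 (by finiteness), ENNReal.toReal_add h4 h5,
      ENNReal.toReal_add h2 (by finiteness), ENNReal.toReal_add h3 h6]
    linarith
  have i1 : ∫ w, g w ∂J1.posPart + (∫ w, g w ∂J2.negPart + ∫ w, g w ∂J3.posPart)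
      = ∫ w, g w ∂J1.negPart + (∫ w, g w ∂J2.posPart + ∫ w, g w ∂J3.negPart) := by
    have intsum : ∀ (a b c : Measure α), IsFiniteMeasure a → IsFiniteMeasure b → IsFiniteMeasure c →
        ∫ w, g w ∂(a + (b + c)) = ∫ w, g w ∂a + (∫ w, g w ∂b + ∫ w, g w ∂c) := by
      intro a b c ha hb hc
      rw [integral_add_measure (hg a ha) ((hg b hb).add_measure (hg c hc)),
        integral_add_measure (hg b hb) (hg c hc)]
    rw [← intsum _ _ _ inferInstance inferInstance inferInstance,
        ← intsum _ _ _ inferInstance inferInstance inferInstance, key]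
  simp only [sInt]
  linarith

/-- For a biased sampling measure ρ^ε, if μ† satisfies the orthogonality
condition for ρ, then for every ν the quantity ∫_Ω L_{ρ^ε}(f − Kν) d(ν − μ†) is strictly
negative whenever ‖f − Kν‖_{L²(ρ^ε)} > ‖f − Kμ†‖_{L²(ρ^ε)}. -/
theorem biased_strict_descent
    {d : ℕ} (Ω : Set (Pd d)) (hΩ : IsCompact Ω)
    (ρ : Measure (Ed d)) [IsProbabilityMeasure ρ]
    (hρ2 : Integrable (fun x : Ed d => ‖x‖ ^ 2) ρ)
    (ρε : Measure (Ed d)) [IsProbabilityMeasure ρε]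
    (hρε2 : Integrable (fun x : Ed d => ‖x‖ ^ 2) ρε)
    (σ : ℝ → ℝ) (Lσ : NNReal) (hσ : LipschitzWith Lσ σ)
    (f : Ed d → ℝ) (hfm : Measurable f) (hf2 : MemLp f 2 ρ) (hf2' : MemLp f 2 ρε)
    (μdag : SignedMeasure ↥Ω)
    (horth : ∀ w ∈ Ω, Lop σ ρ (fun x => f x - Kop σ μdag x) w = 0) :
    ∀ ν : SignedMeasure ↥Ω,
      L2norm ρε (fun x => f x - Kop σ μdag x) < L2norm ρε (fun x => f x - Kop σ ν x) →
        sInt (ν - μdag) (fun w => Lop σ ρε (fun x => f x - Kop σ ν x) (w : Pd d)) < 0 := by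
  intro ν hlt
  -- a norm bound on Ω
  obtain ⟨B0, hB0⟩ := hΩ.exists_bound_of_continuousOn continuousOn_id
  set B := max B0 0 with hBdef
  have hBnn : (0:ℝ) ≤ B := le_max_right _ _
  have hB : ∀ w : ↥Ω, ‖(w : Pd d)‖ ≤ B := fun w =>
    le_trans (by simpa using hB0 w w.2) (le_max_left _ _)
  set Cb := |σ 0| + (Lσ : ℝ) * B with hCbdef
  have hCbnn : (0:ℝ) ≤ Cb := add_nonneg (abs_nonneg _) (mul_nonneg Lσ.coe_nonneg hBnn)
  -- pointwise bound on the activation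
  have hΦb : ∀ (w : ↥Ω) (x : Ed d),
      |σ (⟪(w : Pd d).1, x⟫ + (w : Pd d).2)| ≤ Cb * (1 + ‖x‖) := by
    intro w x
    have h1 : |⟪(w : Pd d).1, x⟫| ≤ B * ‖x‖ := by
      refine le_trans (abs_real_inner_le_norm _ _) ?_
      have := (norm_fst_le (w : Pd d)).trans (hB w)
      exact mul_le_mul_of_nonneg_right this (norm_nonneg x)
    have h2 : |(w : Pd d).2| ≤ B := le_trans (norm_snd_le (w : Pd d)) (hB w)
    have h3 : |σ (⟪(w : Pd d).1, x⟫ + (w : Pd d).2) - σ 0|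
        ≤ (Lσ : ℝ) * |⟪(w : Pd d).1, x⟫ + (w : Pd d).2| := by
      simpa [Real.dist_eq] using hσ.dist_le_mul (⟪(w : Pd d).1, x⟫ + (w : Pd d).2) 0
    have h4 : |⟪(w : Pd d).1, x⟫ + (w : Pd d).2| ≤ B * ‖x‖ + B :=
      (abs_add_le _ _).trans (by linarith)
    have h5 : |σ (⟪(w : Pd d).1, x⟫ + (w : Pd d).2)|
        ≤ |σ 0| + |σ (⟪(w : Pd d).1, x⟫ + (w : Pd d).2) - σ 0| := by
      have := abs_add_le (σ 0) (σ (⟪(w : Pd d).1, x⟫ + (w : Pd d).2) - σ 0)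
      simpa using this
    have hLnn : (0:ℝ) ≤ (Lσ : ℝ) := Lσ.coe_nonneg
    have hxnn : (0:ℝ) ≤ ‖x‖ := norm_nonneg x
    have habs : (0:ℝ) ≤ |σ 0| := abs_nonneg _
    rw [hCbdef]
    nlinarith [mul_le_mul_of_nonneg_left h4 hLnn]
  -- continuity of the activation in both variables
  have hΦc : Continuous fun p : ↥Ω × Ed d => σ (⟪(p.1 : Pd d).1, p.2⟫ + (p.1 : Pd d).2) := by
    apply hσ.continuous.comp
    have h1 : Continuous fun p : ↥Ω × Ed d => ((p.1 : Pd d).1, p.2) :=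
      ((continuous_subtype_val.comp continuous_fst).fst).prodMk continuous_snd
    exact (continuous_inner.comp h1).add ((continuous_subtype_val.comp continuous_fst).snd)
  have hΦc' : StronglyMeasurable fun p : Ed d × ↥Ω =>
      σ (⟪(p.2 : Pd d).1, p.1⟫ + (p.2 : Pd d).2) :=
    (hΦc.comp (continuous_snd.prodMk continuous_fst)).stronglyMeasurable
  -- integrability of the activation w.r.t. any finite measure on Ω
  have hσint : ∀ (x : Ed d) (P : Measure ↥Ω), IsFiniteMeasure P →
      Integrable (fun w : ↥Ω => σ (⟪(w : Pd d).1, x⟫ + (w : Pd d).2)) P := by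
    intro x P hP
    refine (integrable_const (Cb * (1 + ‖x‖))).mono'
      ((hΦc.comp (Continuous.prodMk continuous_id continuous_const)).aestronglyMeasurable) ?_
    filter_upwards with w
    simpa [Real.norm_eq_abs] using hΦb w x
  -- the parametric integrals are L² w.r.t. ρε
  have hV2 : MemLp (fun x : Ed d => 1 + ‖x‖) 2 ρε :=
    (memLp_const (1:ℝ)).add ((memLp_two_iff_integrable_sq continuous_norm.aestronglyMeasurable).mpr hρε2)
  have hIK : ∀ (P : Measure ↥Ω), IsFiniteMeasure P →
      MemLp (fun x : Ed d => ∫ w, σ (⟪(w : Pd d).1, x⟫ + (w : Pd d).2) ∂P) 2 ρε := by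
    intro P hP
    have hsm : StronglyMeasurable fun x : Ed d =>
        ∫ w, σ (⟪(w : Pd d).1, x⟫ + (w : Pd d).2) ∂P :=
      StronglyMeasurable.integral_prod_right' (ν := P) hΦc'
    refine MemLp.of_le (hV2.const_mul ((P Set.univ).toReal * Cb)) hsm.aestronglyMeasurable ?_
    filter_upwards with x
    have hb : ‖∫ w, σ (⟪(w : Pd d).1, x⟫ + (w : Pd d).2) ∂P‖
        ≤ Cb * (1 + ‖x‖) * (P Set.univ).toReal := by
      refine norm_integral_le_of_norm_le_const ?_
      filter_upwards with w
      simpa [Real.norm_eq_abs] using hΦb w x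
    calc ‖∫ w, σ (⟪(w : Pd d).1, x⟫ + (w : Pd d).2) ∂P‖
        ≤ Cb * (1 + ‖x‖) * (P Set.univ).toReal := hb
      _ = (P Set.univ).toReal * Cb * (1 + ‖x‖) := by ring
      _ ≤ ‖(P Set.univ).toReal * Cb * (1 + ‖x‖)‖ := le_abs_self _
  have hKsm : ∀ (μ : SignedMeasure ↥Ω), StronglyMeasurable (Kop σ μ) := by
    intro μ
    have h1 := StronglyMeasurable.integral_prod_right'
      (ν := μ.toJordanDecomposition.posPart) hΦc'
    have h2 := StronglyMeasurable.integral_prod_right'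
      (ν := μ.toJordanDecomposition.negPart) hΦc'
    exact h1.sub h2
  have hKmem : ∀ (μ : SignedMeasure ↥Ω), MemLp (Kop σ μ) 2 ρε := by
    intro μ
    exact (hIK _ inferInstance).sub (hIK _ inferInstance)
  set gν : Ed d → ℝ := fun x => f x - Kop σ ν x with hgνdef
  set gd : Ed d → ℝ := fun x => f x - Kop σ μdag x with hgddef
  have hgνmem : MemLp gν 2 ρε := hf2'.sub (hKmem ν)
  have hgdmem : MemLp gd 2 ρε := hf2'.sub (hKmem μdag)
  have hgνsm : StronglyMeasurable gν := hfm.stronglyMeasurable.sub (hKsm ν)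
  -- Fubini
  have hswap : ∀ (P : Measure ↥Ω), IsFiniteMeasure P →
      ∫ w, (∫ x, gν x * σ (⟪(w : Pd d).1, x⟫ + (w : Pd d).2) ∂ρε) ∂P
        = ∫ x, gν x * (∫ w, σ (⟪(w : Pd d).1, x⟫ + (w : Pd d).2) ∂P) ∂ρε := by
    intro P hP
    have hGρ : Integrable (fun x => |gν x| * (Cb * (1 + ‖x‖))) ρε :=
      mulL2_integrable hgνmem.abs (hV2.const_mul Cb)
    have hGprod : Integrable (fun z : ↥Ω × Ed d => |gν z.2| * (Cb * (1 + ‖z.2‖))) (P.prod ρε) := by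
      have hmap : (P.prod ρε).map Prod.snd = P Set.univ • ρε := Measure.map_snd_prod
      have h1 : Integrable (fun x => |gν x| * (Cb * (1 + ‖x‖))) ((P.prod ρε).map Prod.snd) := by
        rw [hmap]; exact hGρ.smul_measure (measure_ne_top P _)
      exact (integrable_map_measure h1.aestronglyMeasurable measurable_snd.aemeasurable).mp h1
    have hsm : AEStronglyMeasurable
        (fun z : ↥Ω × Ed d => gν z.2 * σ (⟪(z.1 : Pd d).1, z.2⟫ + (z.1 : Pd d).2)) (P.prod ρε) :=
      ((hgνsm.comp_measurable measurable_snd).mul hΦc.stronglyMeasurable).aestronglyMeasurable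
    have hint : Integrable (Function.uncurry fun (w : ↥Ω) (x : Ed d) =>
        gν x * σ (⟪(w : Pd d).1, x⟫ + (w : Pd d).2)) (P.prod ρε) := by
      refine hGprod.mono' hsm ?_
      filter_upwards with z
      simp only [Function.uncurry]
      rw [Real.norm_eq_abs, abs_mul]
      exact mul_le_mul_of_nonneg_left (hΦb z.1 z.2) (abs_nonneg _)
    have hs := MeasureTheory.integral_integral_swap hint
    refine hs.trans ?_
    exact integral_congr_ae (Filter.Eventually.of_forall fun x => integral_const_mul _ _)
  -- the key identity
  set P1 := (ν - μdag).toJordanDecomposition.posPart with hP1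
  set N1 := (ν - μdag).toJordanDecomposition.negPart with hN1
  have hA : sInt (ν - μdag) (fun w => Lop σ ρε gν (w : Pd d))
      = ∫ x, gν x * (Kop σ ν x - Kop σ μdag x) ∂ρε := by
    have e1 : sInt (ν - μdag) (fun w => Lop σ ρε gν (w : Pd d))
        = (∫ x, gν x * (∫ w, σ (⟪(w : Pd d).1, x⟫ + (w : Pd d).2) ∂P1) ∂ρε)
          - ∫ x, gν x * (∫ w, σ (⟪(w : Pd d).1, x⟫ + (w : Pd d).2) ∂N1) ∂ρε := by
      simp only [sInt, Lop]
      rw [← hP1, ← hN1, hswap P1 inferInstance, hswap N1 inferInstance]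
    rw [e1, ← integral_sub (mulL2_integrable hgνmem (hIK P1 inferInstance))
      (mulL2_integrable hgνmem (hIK N1 inferInstance))]
    refine integral_congr_ae (Filter.Eventually.of_forall fun x => ?_)
    have hd : Kop σ ν x - Kop σ μdag x
        = sInt (ν - μdag) (fun w : ↥Ω => σ (⟪(w : Pd d).1, x⟫ + (w : Pd d).2)) := by
      rw [sInt_sub ν μdag (fun P hP => hσint x P hP)]
      rfl
    simp only
    rw [hd]
    simp only [sInt, ← hP1, ← hN1]
    ring
  rw [hA]
  -- conclude via AM–GM
  have hA2 : ∫ x, gν x * (Kop σ ν x - Kop σ μdag x) ∂ρε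
      = ∫ x, (gν x * gd x - gν x ^ 2) ∂ρε := by
    refine integral_congr_ae (Filter.Eventually.of_forall fun x => ?_)
    simp only [hgνdef, hgddef]
    ring
  clear_value gν gd
  have hgν2 : Integrable (fun x => gν x ^ 2) ρε := (memLp_two_iff_integrable_sq hgνmem.1).mp hgνmem
  have hgd2 : Integrable (fun x => gd x ^ 2) ρε := (memLp_two_iff_integrable_sq hgdmem.1).mp hgdmem
  have hint1 : Integrable (fun x => gν x * gd x - gν x ^ 2) ρε :=
    (mulL2_integrable hgνmem hgdmem).sub hgν2
  have hint2 : Integrable (fun x => gd x ^ 2 / 2 - gν x ^ 2 / 2) ρε :=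
    (hgd2.div_const 2).sub (hgν2.div_const 2)
  have hmono : ∫ x, (gν x * gd x - gν x ^ 2) ∂ρε ≤ ∫ x, (gd x ^ 2 / 2 - gν x ^ 2 / 2) ∂ρε := by
    refine integral_mono_ae hint1 hint2 ?_
    filter_upwards with x
    nlinarith [sq_nonneg (gν x - gd x)]
  have hval : ∫ x, (gd x ^ 2 / 2 - gν x ^ 2 / 2) ∂ρε = L2sq ρε gd / 2 - L2sq ρε gν / 2 := by
    rw [integral_sub (hgd2.div_const 2) (hgν2.div_const 2), integral_div, integral_div]
    rfl
  have hsq : L2sq ρε gd < L2sq ρε gν := by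
    by_contra h
    push_neg at h
    exact absurd (Real.sqrt_le_sqrt h) (not_le.mpr hlt)
  rw [hA2]
  calc ∫ x, (gν x * gd x - gν x ^ 2) ∂ρε ≤ L2sq ρε gd / 2 - L2sq ρε gν / 2 := by
        rw [← hval]; exact hmono
    _ < 0 := by linarith

end
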